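/- Let u : ℝ → ℝ be four times continuously differentiable on [x − h₋, x + h₊], where h₋ > 0 and h₊ > 0, with |u'''(ξ)| ≤ M₃ and |u''''(ξ)| ≤ M₄ on this interval. Then the central second-difference on the nonuniform stencil satisfies | ( 2/(h₋ + h₊) ) · ( (u(x + h₊) − u(x))/h₊ − (u(x) − u(x − h₋))/h₋ ) − u''(x) | ≤ (M₃/3)·|h₊ − h₋| + (M₄/12)·(h₊² + h₋²). In particular, the approximation is first-order in general and second-order when h₊ = h₋. -/

import Mathlib

open Set

lemma iterDeriv_sub_Icc {f : ℝ → ℝ} {N : ℕ∞} {a b a' b' : ℝ} (ha : a ≤ a') (hb : b' ≤ b)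
    (hab : a' < b') (hf : ContDiffOn ℝ N f (Icc a b)) {m : ℕ} (hm : (m : ℕ∞) ≤ N)
    {y : ℝ} (hy : y ∈ Icc a' b') :
    iteratedDerivWithin m f (Icc a' b') y = iteratedDerivWithin m f (Icc a b) y := by
  have hsub : Icc a' b' ⊆ Icc a b := Icc_subset_Icc ha hb
  have hab' : a < b := lt_of_le_of_lt ha (lt_of_lt_of_le hab hb)
  have h1 := hf.ftaylorSeriesWithin (uniqueDiffOn_Icc hab')
  have h2 := (h1.mono hsub).eq_iteratedFDerivWithin_of_uniqueDiffOn
    (by exact_mod_cast hm) (uniqueDiffOn_Icc hab) hy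
  rw [iteratedDerivWithin_eq_iteratedFDerivWithin, iteratedDerivWithin_eq_iteratedFDerivWithin,
    ← h2]
  rfl

lemma iterDeriv_reflect {f : ℝ → ℝ} {N : ℕ∞} {a b : ℝ} (hab : a < b)
    (hf : ContDiffOn ℝ N f (Icc a b)) : ∀ (n : ℕ), (n : ℕ∞) ≤ N →
    ∀ y ∈ Icc a b, iteratedDerivWithin n (fun t => f (a + b - t)) (Icc a b) y
      = (-1 : ℝ) ^ n * iteratedDerivWithin n f (Icc a b) (a + b - y) := by
  intro n
  induction n with
  | zero => intro _ y hy; simp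
  | succ n ih =>
    intro hn y hy
    have hn' : (n : ℕ∞) ≤ N := le_trans (by exact_mod_cast Nat.le_succ n) hn
    have hnlt : (n : ℕ∞) < N := lt_of_lt_of_le (by exact_mod_cast Nat.lt_succ_self n) hn
    have hy' : a + b - y ∈ Icc a b := ⟨by linarith [hy.2], by linarith [hy.1]⟩
    have hud := uniqueDiffOn_Icc hab
    have hmaps : MapsTo (fun t : ℝ => a + b - t) (Icc a b) (Icc a b) := by
      intro z hz; simp only [mem_Icc] at hz ⊢; constructor <;> linarith
    rw [iteratedDerivWithin_succ]
    have hcongr : derivWithin (iteratedDerivWithin n (fun t => f (a + b - t)) (Icc a b))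
        (Icc a b) y
        = derivWithin (fun z => (-1 : ℝ) ^ n * iteratedDerivWithin n f (Icc a b) (a + b - z))
          (Icc a b) y :=
      derivWithin_congr (fun z hz => ih hn' z hz) (ih hn' y hy)
    rw [hcongr]
    have hF : HasDerivWithinAt (iteratedDerivWithin n f (Icc a b))
        (iteratedDerivWithin (n + 1) f (Icc a b) (a + b - y)) (Icc a b) (a + b - y) := by
      have hd := ((hf.differentiableOn_iteratedDerivWithin (by exact_mod_cast hnlt) hud)
        (a + b - y) hy').hasDerivWithinAt
      rwa [← iteratedDerivWithin_succ] at hd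
    have hr : HasDerivWithinAt (fun t : ℝ => a + b - t) (-1) (Icc a b) y := by
      simpa using (hasDerivWithinAt_id y (Icc a b)).const_sub (a + b)
    have hcomp := (hF.comp y hr hmaps).const_mul ((-1 : ℝ) ^ n)
    have hcomp' : HasDerivWithinAt
        (fun z => (-1 : ℝ) ^ n * iteratedDerivWithin n f (Icc a b) (a + b - z))
        ((-1 : ℝ) ^ n * (iteratedDerivWithin (n + 1) f (Icc a b) (a + b - y) * -1))
        (Icc a b) y := by simpa [Function.comp] using hcomp
    rw [hcomp'.derivWithin (hud y hy)]
    ring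

set_option maxHeartbeats 1000000

/-- Truncation-error estimate for the central second-difference on a
nonuniform stencil with steps `h₋` (to the left) and `h₊` (to the right):
the error is bounded by `(M₃/3)|h₊ − h₋| + (M₄/12)(h₊² + h₋²)`, so the
approximation of `u''(x)` is first-order in general and second-order when
`h₊ = h₋`. -/
theorem central_second_difference_error
    (u : ℝ → ℝ) (x hm hp M₃ M₄ : ℝ) (hhm : 0 < hm) (hhp : 0 < hp)
    (hu : ContDiffOn ℝ 4 u (Set.Icc (x - hm) (x + hp)))
    (hM₃ : ∀ ξ ∈ Set.Icc (x - hm) (x + hp),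
      |iteratedDerivWithin 3 u (Set.Icc (x - hm) (x + hp)) ξ| ≤ M₃)
    (hM₄ : ∀ ξ ∈ Set.Icc (x - hm) (x + hp),
      |iteratedDerivWithin 4 u (Set.Icc (x - hm) (x + hp)) ξ| ≤ M₄) :
    |(2 / (hm + hp)) * ((u (x + hp) - u x) / hp - (u x - u (x - hm)) / hm)
        - iteratedDerivWithin 2 u (Set.Icc (x - hm) (x + hp)) x|
      ≤ (M₃ / 3) * |hp - hm| + (M₄ / 12) * (hp ^ 2 + hm ^ 2) := by
  have hab : x - hm < x + hp := by linarith
  have hxp : x < x + hp := by linarith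
  have hxm : x - hm < x := by linarith
  have hxmem : x ∈ Icc (x - hm) (x + hp) := ⟨by linarith, by linarith⟩
  set s := Icc (x - hm) (x + hp) with hs
  set d : ℕ → ℝ → ℝ := fun k => iteratedDerivWithin k u s with hd
  -- right expansion
  have huP : ContDiffOn ℝ 4 u (Icc x (x + hp)) :=
    hu.mono (Icc_subset_Icc (by linarith) le_rfl)
  have hsubP : ∀ {m : ℕ}, (m : ℕ∞) ≤ 4 → ∀ {y : ℝ}, y ∈ Icc x (x + hp) →
      iteratedDerivWithin m u (Icc x (x + hp)) y = d m y := by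
    intro m hm4 y hy; exact iterDeriv_sub_Icc (by linarith) le_rfl hxp hu hm4 hy
  have hdiffP : DifferentiableOn ℝ (iteratedDerivWithin 3 u (Icc x (x + hp)))
      (Ioo x (x + hp)) := by
    have h1 : DifferentiableOn ℝ (d 3) s :=
      hu.differentiableOn_iteratedDerivWithin (by norm_num) (uniqueDiffOn_Icc hab)
    refine (h1.mono ?_).congr ?_
    · intro z hz; exact ⟨by linarith [hz.1], le_of_lt hz.2⟩
    · intro z hz; exact hsubP (by norm_num) (Ioo_subset_Icc_self hz)
  obtain ⟨xip, hxip, hTp⟩ := taylor_mean_remainder_lagrange (n := 3) hxp.ne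
    (by rw [uIcc_of_le hxp.le]; exact huP.of_le (by norm_num))
    (by rw [uIcc_of_le hxp.le, uIoo_of_le hxp.le]; exact hdiffP)
  rw [uIcc_of_le hxp.le] at hTp; rw [uIoo_of_le hxp.le] at hxip
  have e1 : u (x + hp) = u x + hp * d 1 x + hp ^ 2 / 2 * d 2 x + hp ^ 3 / 6 * d 3 x
      + d 4 xip * hp ^ 4 / 24 := by
    have hxip' : xip ∈ Icc x (x + hp) := Ioo_subset_Icc_self hxip
    rw [taylor_within_apply] at hTp
    rw [hsubP (by norm_num) hxip'] at hTp
    have hx0 : x ∈ Icc x (x + hp) := ⟨le_rfl, by linarith⟩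
    simp only [Finset.sum_range_succ, Finset.sum_range_zero, smul_eq_mul,
      hsubP (by norm_num : ((0:ℕ) : ℕ∞) ≤ 4) hx0, hsubP (by norm_num : ((1:ℕ) : ℕ∞) ≤ 4) hx0,
      hsubP (by norm_num : ((2:ℕ) : ℕ∞) ≤ 4) hx0,
      hsubP (by norm_num : ((3:ℕ) : ℕ∞) ≤ 4) hx0] at hTp
    simp only [hd, iteratedDerivWithin_zero] at hTp ⊢
    norm_num [Nat.factorial] at hTp
    rw [iteratedDerivWithin_one]
    linarith [hTp]
  -- left expansion
  have hum : ContDiffOn ℝ 4 u (Icc (x - hm) x) :=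
    hu.mono (Icc_subset_Icc le_rfl (by linarith))
  have hsubM : ∀ {m : ℕ}, (m : ℕ∞) ≤ 4 → ∀ {y : ℝ}, y ∈ Icc (x - hm) x →
      iteratedDerivWithin m u (Icc (x - hm) x) y = d m y := by
    intro m hm4 y hy; exact iterDeriv_sub_Icc le_rfl (by linarith) hxm hu hm4 hy
  have hrefl := iterDeriv_reflect hxm hum
  set g : ℝ → ℝ := fun t => u ((x - hm) + x - t) with hg
  have hgyc : ∀ y : ℝ, g y = u ((x - hm) + x - y) := fun y => rfl
  have hmapsM : MapsTo (fun t : ℝ => (x - hm) + x - t) (Icc (x - hm) x) (Icc (x - hm) x) := by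
    intro z hz; simp only [mem_Icc] at hz ⊢; constructor <;> linarith
  have hgC : ContDiffOn ℝ 3 g (Icc (x - hm) x) := by
    have haff : ContDiffOn ℝ 3 (fun t : ℝ => (x - hm) + x - t) (Icc (x - hm) x) :=
      (contDiff_const.sub contDiff_id).contDiffOn
    exact (hum.of_le (by norm_num)).comp haff hmapsM
  have hdiffM : DifferentiableOn ℝ (iteratedDerivWithin 3 g (Icc (x - hm) x))
      (Ioo (x - hm) x) := by
    have h1 : DifferentiableOn ℝ (d 3) s :=
      hu.differentiableOn_iteratedDerivWithin (by norm_num) (uniqueDiffOn_Icc hab)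
    have haffd : DifferentiableOn ℝ (fun t : ℝ => (x - hm) + x - t) (Ioo (x - hm) x) :=
      (differentiable_const _ |>.sub differentiable_id).differentiableOn
    have hmaps2 : MapsTo (fun t : ℝ => (x - hm) + x - t) (Ioo (x - hm) x) s := by
      intro z hz; simp only [mem_Ioo] at hz
      simp only [hs, mem_Icc]; constructor <;> linarith
    have h2 : DifferentiableOn ℝ (fun y => (-1 : ℝ) ^ 3 * d 3 ((x - hm) + x - y))
        (Ioo (x - hm) x) := ((h1.comp haffd hmaps2).const_mul _)
    refine h2.congr ?_
    intro z hz
    have hz' : z ∈ Icc (x - hm) x := Ioo_subset_Icc_self hz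
    rw [hrefl 3 (by norm_num) z hz', hsubM (by norm_num) (hmapsM hz')]
  have hxmem2 : x ∈ Icc (x - hm) x := ⟨by linarith, le_rfl⟩
  obtain ⟨xim, hxim, hTm⟩ := taylor_mean_remainder_lagrange (n := 3) hxm.ne
    (by rw [uIcc_of_le hxm.le]; exact hgC)
    (by rw [uIcc_of_le hxm.le, uIoo_of_le hxm.le]; exact hdiffM)
  rw [uIcc_of_le hxm.le] at hTm; rw [uIoo_of_le hxm.le] at hxim
  have e2 : u (x - hm) = u x - hm * d 1 x + hm ^ 2 / 2 * d 2 x - hm ^ 3 / 6 * d 3 x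
      + d 4 ((x - hm) + x - xim) * hm ^ 4 / 24 := by
    have hxim' : xim ∈ Icc (x - hm) x := Ioo_subset_Icc_self hxim
    have hx0 : x - hm ∈ Icc (x - hm) x := ⟨le_rfl, by linarith⟩
    rw [taylor_within_apply] at hTm
    rw [hrefl 4 (by norm_num) xim hxim',
      hsubM (by norm_num) (hmapsM hxim')] at hTm
    simp only [Finset.sum_range_succ, Finset.sum_range_zero, smul_eq_mul,
      hrefl 0 (by norm_num) _ hx0, hrefl 1 (by norm_num) _ hx0,
      hrefl 2 (by norm_num) _ hx0, hrefl 3 (by norm_num) _ hx0] at hTm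
    have hxx : (x - hm) + x - (x - hm) = x := by ring
    rw [hxx] at hTm
    simp only [hsubM (by norm_num : ((0:ℕ) : ℕ∞) ≤ 4) hxmem2, 
      hsubM (by norm_num : ((1:ℕ) : ℕ∞) ≤ 4) hxmem2,
      hsubM (by norm_num : ((2:ℕ) : ℕ∞) ≤ 4) hxmem2,
      hsubM (by norm_num : ((3:ℕ) : ℕ∞) ≤ 4) hxmem2] at hTm
    have hgx : g x = u (x - hm) := by rw [hgyc]; ring_nf
    rw [hgx] at hTm
    simp only [hd, iteratedDerivWithin_zero] at hTm ⊢
    norm_num [Nat.factorial] at hTm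
    rw [iteratedDerivWithin_one]
    linarith [hTm]
  -- final algebra
  have hxipS : xip ∈ s := by
    have := hxip; simp only [mem_Ioo] at this
    simp only [hs, mem_Icc]; constructor <;> linarith [this.1, this.2]
  have hBxS : (x - hm) + x - xim ∈ s := by
    have := hxim; simp only [mem_Ioo] at this
    simp only [hs, mem_Icc]; constructor <;> linarith [this.1, this.2]
  have hA : |d 4 xip| ≤ M₄ := hM₄ _ hxipS
  have hB : |d 4 ((x - hm) + x - xim)| ≤ M₄ := hM₄ _ hBxS
  have h3 : |d 3 x| ≤ M₃ := hM₃ _ hxmem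
  have hd2 : iteratedDerivWithin 2 u s x = d 2 x := rfl
  have hne1 : hm + hp ≠ 0 := by positivity
  have hne2 : hp ≠ 0 := ne_of_gt hhp
  have hne3 : hm ≠ 0 := ne_of_gt hhm
  have key : 2 / (hm + hp) * ((u (x + hp) - u x) / hp - (u x - u (x - hm)) / hm)
      - iteratedDerivWithin 2 u s x
      = (hp - hm) / 3 * d 3 x
        + (d 4 xip * hp ^ 3 + d 4 ((x - hm) + x - xim) * hm ^ 3) / (12 * (hm + hp)) := by
    rw [hd2, e1, e2]
    field_simp
    ring
  rw [key]
  have hM4nn : 0 ≤ M₄ := le_trans (abs_nonneg _) hA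
  have t1 : |(hp - hm) / 3 * d 3 x| ≤ M₃ / 3 * |hp - hm| := by
    rw [abs_mul, abs_div, abs_of_pos (by norm_num : (0:ℝ) < 3)]
    nlinarith [abs_nonneg (hp - hm), abs_nonneg (d 3 x)]
  have hden : (0:ℝ) < 12 * (hm + hp) := by positivity
  have t2 : |(d 4 xip * hp ^ 3 + d 4 ((x - hm) + x - xim) * hm ^ 3) / (12 * (hm + hp))|
      ≤ M₄ / 12 * (hp ^ 2 + hm ^ 2) := by
    rw [abs_div, abs_of_pos hden, div_le_iff₀ hden]
    have hnum : |d 4 xip * hp ^ 3 + d 4 ((x - hm) + x - xim) * hm ^ 3|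
        ≤ M₄ * hp ^ 3 + M₄ * hm ^ 3 := by
      calc |d 4 xip * hp ^ 3 + d 4 ((x - hm) + x - xim) * hm ^ 3|
          ≤ |d 4 xip * hp ^ 3| + |d 4 ((x - hm) + x - xim) * hm ^ 3| := abs_add_le _ _
        _ = |d 4 xip| * hp ^ 3 + |d 4 ((x - hm) + x - xim)| * hm ^ 3 := by
            rw [abs_mul, abs_mul, abs_of_pos (pow_pos hhp 3), abs_of_pos (pow_pos hhm 3)]
        _ ≤ M₄ * hp ^ 3 + M₄ * hm ^ 3 :=
            add_le_add (mul_le_mul_of_nonneg_right hA (pow_pos hhp 3).le)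
              (mul_le_mul_of_nonneg_right hB (pow_pos hhm 3).le)
    refine le_trans hnum ?_
    nlinarith [mul_nonneg hM4nn (mul_nonneg (mul_nonneg hhp.le hhp.le) hhm.le),
      mul_nonneg hM4nn (mul_nonneg (mul_nonneg hhm.le hhm.le) hhp.le)]
  calc |(hp - hm) / 3 * d 3 x
        + (d 4 xip * hp ^ 3 + d 4 ((x - hm) + x - xim) * hm ^ 3) / (12 * (hm + hp))|
      ≤ |(hp - hm) / 3 * d 3 x|
        + |(d 4 xip * hp ^ 3 + d 4 ((x - hm) + x - xim) * hm ^ 3) / (12 * (hm + hp))| :=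
        abs_add_le _ _
    _ ≤ M₃ / 3 * |hp - hm| + M₄ / 12 * (hp ^ 2 + hm ^ 2) := add_le_add t1 t2
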